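/- Let n ≥ 3, let V be an n-dimensional real vector space with a positive definite symmetric bilinear form h, let 𝒮 be an h-self-adjoint endomorphism with exactly three distinct eigenvalues λ₀, λ₁, λ₂ of multiplicities 1, n₁, n₂ respectively (1 + n₁ + n₂ = n); set S(X,Y) = h(X,𝒮Y), R* = (1/2) S∧S, α = λ₀+λ₁+λ₂, β = −λ₀(λ₁+λ₂) − λ₁λ₂, γ = λ₀λ₁λ₂, A = (Ric(R*))² + ((α − tr(𝒮))² + β)·Ric(R*) − γ(α − 2·tr(𝒮))·h, and μ = γ + (α − tr(𝒮))(β + tr(𝒮)(α − tr(𝒮))). Then A = μ·S, and μ = (λ₀ + (n₁−1)λ₁ + (n₂−1)λ₂)·(λ₁λ₂ + (n₁λ₁ + n₂λ₂)((n₁−1)λ₁ + (n₂−1)λ₂)). Moreover: (i) if μ = 0 then (Ric(R*))² is a linear combination of Ric(R*) and h (affine partially Einstein* point); (ii) if μ ≠ 0 then R* = (1/(2μ²))·A∧A. -/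

import Mathlib

namespace OVAff

variable {V : Type*} [AddCommGroup V] [Module ℝ V]

/-- Kulkarni–Nomizu product of two (0,2)-tensors. -/
noncomputable def KN (E F : V → V → ℝ) : V → V → V → V → ℝ := fun X₁ X₂ X₃ X₄ =>
  E X₁ X₄ * F X₂ X₃ + E X₂ X₃ * F X₁ X₄ - E X₁ X₃ * F X₂ X₄ - E X₂ X₄ * F X₁ X₃

/-- Kulkarni–Nomizu product of a (0,2)-tensor with a (0,4)-tensor. -/
noncomputable def KN4 (E : V → V → ℝ) (T : V → V → V → V → ℝ) :
    V → V → V → V → V → V → ℝ := fun X₁ X₂ X₃ X₄ Y₁ Y₂ =>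
  E X₁ X₄ * T X₂ X₃ Y₁ Y₂ + E X₂ X₃ * T X₁ X₄ Y₁ Y₂
    - E X₁ X₃ * T X₂ X₄ Y₁ Y₂ - E X₂ X₄ * T X₁ X₃ Y₁ Y₂

/-- (X ∧_A Y) Z = A(Y,Z) X − A(X,Z) Y. -/
noncomputable def wedgeVec (A : V → V → ℝ) (X Y Z : V) : V := A Y Z • X - A X Z • Y

/-- Tachibana operator Q(A,T) on a (0,2)-tensor T. -/
noncomputable def Q2 (A T : V → V → ℝ) : V → V → V → V → ℝ :=
  fun X₁ X₂ X Y => -(T (wedgeVec A X Y X₁) X₂ + T X₁ (wedgeVec A X Y X₂))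

/-- Tachibana operator Q(A,T) on a (0,4)-tensor T. -/
noncomputable def Q4 (A : V → V → ℝ) (T : V → V → V → V → ℝ) :
    V → V → V → V → V → V → ℝ := fun X₁ X₂ X₃ X₄ X Y =>
  -(T (wedgeVec A X Y X₁) X₂ X₃ X₄ + T X₁ (wedgeVec A X Y X₂) X₃ X₄
    + T X₁ X₂ (wedgeVec A X Y X₃) X₄ + T X₁ X₂ X₃ (wedgeVec A X Y X₄))

/-- The derivation B·T of a curvature operator family ℬ (with h(ℬ(X,Y)Z,W)=B(X,Y,Z,W))
acting on a (0,2)-tensor T. -/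
noncomputable def dot2 (ℬ : V → V → V → V) (T : V → V → ℝ) : V → V → V → V → ℝ :=
  fun X₁ X₂ X Y => -(T (ℬ X Y X₁) X₂ + T X₁ (ℬ X Y X₂))

/-- The derivation B·T acting on a (0,4)-tensor T. -/
noncomputable def dot4 (ℬ : V → V → V → V) (T : V → V → V → V → ℝ) :
    V → V → V → V → V → V → ℝ := fun X₁ X₂ X₃ X₄ X Y =>
  -(T (ℬ X Y X₁) X₂ X₃ X₄ + T X₁ (ℬ X Y X₂) X₃ X₄
    + T X₁ X₂ (ℬ X Y X₃) X₄ + T X₁ X₂ X₃ (ℬ X Y X₄))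

/-- Ricci contraction of a (0,4)-tensor with respect to an h-orthonormal basis `e`
with signs `ε`. -/
noncomputable def ricci {n : ℕ} (ε : Fin n → ℝ) (e : Fin n → V)
    (B : V → V → V → V → ℝ) : V → V → ℝ :=
  fun X Y => ∑ j, ε j * B (e j) X Y (e j)

/-- Scalar curvature of a (0,4)-tensor. -/
noncomputable def scal {n : ℕ} (ε : Fin n → ℝ) (e : Fin n → V)
    (B : V → V → V → V → ℝ) : ℝ :=
  ∑ j, ε j * ricci ε e B (e j) (e j)

/-- Weyl tensor of a (0,4)-tensor with respect to the metric h. -/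
noncomputable def weyl {n : ℕ} (h : V → V → ℝ) (ε : Fin n → ℝ) (e : Fin n → V)
    (B : V → V → V → V → ℝ) : V → V → V → V → ℝ := fun X₁ X₂ X₃ X₄ =>
  B X₁ X₂ X₃ X₄ - (1 / ((n : ℝ) - 2)) * KN h (ricci ε e B) X₁ X₂ X₃ X₄
    + (scal ε e B / (2 * ((n : ℝ) - 2) * ((n : ℝ) - 1))) * KN h h X₁ X₂ X₃ X₄


/-- three distinct affine principal curvatures λ₀, λ₁, λ₂ with multiplicities
1, n₁, n₂: the identity A = μ·S, the product formula for μ, and its two consequences. -/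
theorem statement12
    {V : Type*} [AddCommGroup V] [Module ℝ V]
    (n : ℕ) (hn : 3 ≤ n)
    (h : LinearMap.BilinForm ℝ V)
    (hsymm : ∀ X Y, h X Y = h Y X)
    (hnd : ∀ X : V, (∀ Y, h X Y = 0) → X = 0)
    [FiniteDimensional ℝ V] (hdim : Module.finrank ℝ V = n)
    (hpos : ∀ X : V, X ≠ 0 → 0 < h X X)
    (e : Module.Basis (Fin n) ℝ V)
    (he : ∀ j k, h (e j) (e k) = if j = k then (1 : ℝ) else 0)
    (𝒮 : V →ₗ[ℝ] V) (hsa : ∀ X Y, h (𝒮 X) Y = h X (𝒮 Y))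
    (S : V → V → ℝ) (hS : S = fun X Y => h X (𝒮 Y))
    (Rstar : V → V → V → V → ℝ)
    (hRstar : Rstar = fun X₁ X₂ X₃ X₄ => (1 / 2 : ℝ) * KN S S X₁ X₂ X₃ X₄)
    (l₀ l₁ l₂ : ℝ) (h01 : l₀ ≠ l₁) (h02 : l₀ ≠ l₂) (h12 : l₁ ≠ l₂)
    (n₁ n₂ : ℕ) (hsum : 1 + n₁ + n₂ = n)
    (heig : ∀ t : ℝ, Module.End.HasEigenvalue 𝒮 t ↔ t = l₀ ∨ t = l₁ ∨ t = l₂)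
    (hm₀ : Module.finrank ℝ ↥(Module.End.eigenspace 𝒮 l₀) = 1)
    (hm₁ : Module.finrank ℝ ↥(Module.End.eigenspace 𝒮 l₁) = n₁)
    (hm₂ : Module.finrank ℝ ↥(Module.End.eigenspace 𝒮 l₂) = n₂)
    (α β γ : ℝ)
    (hα : α = l₀ + l₁ + l₂)
    (hβ : β = -(l₀ * (l₁ + l₂)) - l₁ * l₂)
    (hγ : γ = l₀ * l₁ * l₂)
    (Ric : V → V → ℝ) (hRic : Ric = ricci (fun _ => (1 : ℝ)) (⇑e) Rstar)
    (𝒟 : V →ₗ[ℝ] V) (h𝒟 : ∀ X Y, h (𝒟 X) Y = Ric X Y)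
    (A : V → V → ℝ)
    (hA : A = fun X Y => Ric (𝒟 X) Y
      + ((α - LinearMap.trace ℝ V 𝒮) ^ 2 + β) * Ric X Y
      - γ * (α - 2 * LinearMap.trace ℝ V 𝒮) * h X Y)
    (μ : ℝ)
    (hμ : μ = γ + (α - LinearMap.trace ℝ V 𝒮)
      * (β + LinearMap.trace ℝ V 𝒮 * (α - LinearMap.trace ℝ V 𝒮))) :
    (∀ X Y, A X Y = μ * S X Y) ∧
    (μ = (l₀ + ((n₁ : ℝ) - 1) * l₁ + ((n₂ : ℝ) - 1) * l₂)
      * (l₁ * l₂ + ((n₁ : ℝ) * l₁ + (n₂ : ℝ) * l₂)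
          * (((n₁ : ℝ) - 1) * l₁ + ((n₂ : ℝ) - 1) * l₂))) ∧
    (μ = 0 → ∃ ρ₁ ρ₂ : ℝ, ∀ X Y, Ric (𝒟 X) Y = ρ₁ * Ric X Y + ρ₂ * h X Y) ∧
    (μ ≠ 0 → ∀ X₁ X₂ X₃ X₄,
      Rstar X₁ X₂ X₃ X₄ = (1 / (2 * μ ^ 2)) * KN A A X₁ X₂ X₃ X₄) := by
  classical
  -- τ : the trace of 𝒮
  set τ : ℝ := LinearMap.trace ℝ V 𝒮 with hτ
  -- basic facts about the orthonormal basis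
  have hrepr : ∀ (j : Fin n) (v : V), h (e j) v = e.repr v j := by
    intro j v
    conv_lhs => rw [← e.sum_repr v]
    rw [map_sum]
    simp only [map_smul, smul_eq_mul, he, mul_ite, mul_one, mul_zero]
    simp
  have hcomplete : ∀ u v : V, (∑ j, h u (e j) * h (e j) v) = h u v := by
    intro u v
    conv_rhs => rw [← e.sum_repr v, map_sum]
    simp only [map_smul, smul_eq_mul, hrepr]
    exact Finset.sum_congr rfl fun j _ => mul_comm _ _
  have htrace_on : τ = ∑ j, h (e j) (𝒮 (e j)) := by
    rw [hτ, LinearMap.trace_eq_matrix_trace ℝ e 𝒮, Matrix.trace]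
    simp only [Matrix.diag_apply, LinearMap.toMatrix_apply, hrepr]
  -- eigenspace structure : the three eigenspaces span V
  have hd12 : Disjoint (Module.End.eigenspace 𝒮 l₁) (Module.End.eigenspace 𝒮 l₂) :=
    Module.End.disjoint_genEigenspace 𝒮 h12 1 1
  have hd0 : Disjoint (Module.End.eigenspace 𝒮 l₀)
      (Module.End.eigenspace 𝒮 l₁ ⊔ Module.End.eigenspace 𝒮 l₂) := by
    refine (Module.End.eigenspaces_iSupIndep 𝒮 l₀).mono_right ?_
    refine sup_le ?_ ?_
    · exact le_iSup_of_le l₁ (le_iSup_of_le (Ne.symm h01) le_rfl)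
    · exact le_iSup_of_le l₂ (le_iSup_of_le (Ne.symm h02) le_rfl)
  have hfin12 : Module.finrank ℝ
      ↥(Module.End.eigenspace 𝒮 l₁ ⊔ Module.End.eigenspace 𝒮 l₂) = n₁ + n₂ := by
    have hh := Submodule.finrank_sup_add_finrank_inf_eq
      (Module.End.eigenspace 𝒮 l₁) (Module.End.eigenspace 𝒮 l₂)
    rw [hd12.eq_bot, finrank_bot, hm₁, hm₂] at hh
    omega
  have htop : Module.End.eigenspace 𝒮 l₀ ⊔
      (Module.End.eigenspace 𝒮 l₁ ⊔ Module.End.eigenspace 𝒮 l₂) = ⊤ := by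
    refine Submodule.eq_top_of_disjoint _ _ ?_ hd0
    rw [hm₀, hfin12, hdim]
    omega
  -- the cubic identity for 𝒮
  set T : V →ₗ[ℝ] V :=
    𝒮 ∘ₗ (𝒮 ∘ₗ 𝒮) - α • (𝒮 ∘ₗ 𝒮) - β • 𝒮 - γ • LinearMap.id with hT
  have hker : ∀ c : ℝ, (c = l₀ ∨ c = l₁ ∨ c = l₂) →
      Module.End.eigenspace 𝒮 c ≤ LinearMap.ker T := by
    intro c hc X hX
    rw [Module.End.mem_eigenspace_iff] at hX
    have h2 : 𝒮 (𝒮 X) = (c * c) • X := by rw [hX, map_smul, hX, smul_smul]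
    have h3 : 𝒮 (𝒮 (𝒮 X)) = (c * c * c) • X := by
      rw [h2, map_smul, hX, smul_smul]
    have hcoef : c * c * c - α * (c * c) - β * c - γ = 0 := by
      rcases hc with rfl | rfl | rfl <;> (rw [hα, hβ, hγ]; ring)
    rw [LinearMap.mem_ker, hT]
    simp only [LinearMap.sub_apply, LinearMap.smul_apply, LinearMap.comp_apply,
      LinearMap.id_apply]
    rw [h3, h2, hX]
    calc (c * c * c) • X - α • (c * c) • X - β • c • X - γ • X
        = (c * c * c - α * (c * c) - β * c - γ) • X := by module
      _ = 0 := by rw [hcoef, zero_smul]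
  have hT0 : T = 0 := by
    have hker_top : LinearMap.ker T = ⊤ := by
      rw [eq_top_iff, ← htop]
      exact sup_le (hker l₀ (Or.inl rfl))
        (sup_le (hker l₁ (Or.inr (Or.inl rfl))) (hker l₂ (Or.inr (Or.inr rfl))))
    exact LinearMap.ker_eq_top.mp hker_top
  have hcubic : ∀ X : V, 𝒮 (𝒮 (𝒮 X)) = α • 𝒮 (𝒮 X) + β • 𝒮 X + γ • X := by
    intro X
    have hz := DFunLike.congr_fun hT0 X
    rw [hT] at hz
    simp only [LinearMap.sub_apply, LinearMap.smul_apply, LinearMap.comp_apply,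
      LinearMap.id_apply, LinearMap.zero_apply] at hz
    rw [sub_sub, sub_sub, sub_eq_zero] at hz
    rw [hz]
    module
  -- trace formula
  have hlinj : Function.Injective ![l₀, l₁, l₂] := by
    intro i j hij
    fin_cases i <;> fin_cases j <;>
      simp only [Matrix.cons_val_zero, Matrix.cons_val_one, Matrix.cons_val_two,
        Matrix.head_cons, Matrix.tail_cons] at hij ⊢ <;>
      first
        | rfl
        | exact absurd hij h01 | exact absurd hij h02 | exact absurd hij h12
        | exact absurd hij.symm h01 | exact absurd hij.symm h02 | exact absurd hij.symm h12
  set N : Fin 3 → Submodule ℝ V := fun i => Module.End.eigenspace 𝒮 (![l₀, l₁, l₂] i) with hN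
  have hNindep : iSupIndep N := (Module.End.eigenspaces_iSupIndep 𝒮).comp hlinj
  have hNtop : (⨆ i, N i) = ⊤ := by
    rw [eq_top_iff, ← htop]
    refine sup_le ?_ (sup_le ?_ ?_)
    · exact le_iSup N 0
    · exact le_iSup N 1
    · exact le_iSup N 2
  have hInternal : DirectSum.IsInternal N :=
    DirectSum.isInternal_submodule_of_iSupIndep_of_iSup_eq_top hNindep hNtop
  have hMaps : ∀ i, Set.MapsTo 𝒮 (N i) (N i) := by
    intro i x hx
    rw [SetLike.mem_coe] at hx ⊢
    simp only [hN] at hx ⊢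
    rw [Module.End.mem_eigenspace_iff] at hx ⊢
    rw [hx, map_smul, hx]
  have htr : τ = ∑ i, LinearMap.trace ℝ (N i) (𝒮.restrict (hMaps i)) :=
    LinearMap.trace_eq_sum_trace_restrict hInternal hMaps
  have hres : ∀ i, LinearMap.trace ℝ (N i) (𝒮.restrict (hMaps i))
      = ![l₀, l₁, l₂] i * Module.finrank ℝ (N i) := by
    intro i
    have : 𝒮.restrict (hMaps i) = (![l₀, l₁, l₂] i) • LinearMap.id := by
      ext x
      have hx := x.2
      simp only [hN] at hx
      rw [Module.End.mem_eigenspace_iff] at hx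
      simp only [LinearMap.restrict_coe_apply, LinearMap.smul_apply, LinearMap.id_apply,
        SetLike.val_smul]
      exact hx
    rw [this, map_smul, LinearMap.trace_id, smul_eq_mul]
  have htrace : τ = l₀ + (n₁ : ℝ) * l₁ + (n₂ : ℝ) * l₂ := by
    rw [htr, Fin.sum_univ_three, hres 0, hres 1, hres 2]
    have e0 : Module.finrank ℝ (N 0) = 1 := hm₀
    have e1 : Module.finrank ℝ (N 1) = n₁ := hm₁
    have e2 : Module.finrank ℝ (N 2) = n₂ := hm₂
    rw [e0, e1, e2]
    simp only [Matrix.cons_val_zero, Matrix.cons_val_one, Matrix.cons_val_two,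
      Matrix.head_cons, Matrix.tail_cons, Nat.cast_one, Nat.cast_ofNat]
    ring
  -- formula for Ric
  have hRicf : ∀ X Y : V, Ric X Y = τ * h X (𝒮 Y) - h X (𝒮 (𝒮 Y)) := by
    intro X Y
    rw [hRic]
    simp only [ricci, hRstar, hS, KN, one_mul]
    calc (∑ j, (1 / 2 : ℝ) *
          (h (e j) (𝒮 (e j)) * h X (𝒮 Y) + h X (𝒮 Y) * h (e j) (𝒮 (e j))
            - h (e j) (𝒮 Y) * h X (𝒮 (e j)) - h X (𝒮 (e j)) * h (e j) (𝒮 Y)))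
        = ∑ j, (h (e j) (𝒮 (e j)) * h X (𝒮 Y) - h (𝒮 X) (e j) * h (e j) (𝒮 Y)) := by
          refine Finset.sum_congr rfl fun j _ => ?_
          have := hsa X (e j)
          linear_combination (h (e j) (𝒮 Y)) * this
      _ = (∑ j, h (e j) (𝒮 (e j))) * h X (𝒮 Y) - ∑ j, h (𝒮 X) (e j) * h (e j) (𝒮 Y) := by
          rw [Finset.sum_sub_distrib, Finset.sum_mul]
      _ = τ * h X (𝒮 Y) - h (𝒮 X) (𝒮 Y) := by rw [← htrace_on, hcomplete]
      _ = τ * h X (𝒮 Y) - h X (𝒮 (𝒮 Y)) := by rw [hsa]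
  -- formula for 𝒟
  have h𝒟f : ∀ X : V, 𝒟 X = τ • 𝒮 X - 𝒮 (𝒮 X) := by
    intro X
    have key : ∀ Y : V, h (𝒟 X - (τ • 𝒮 X - 𝒮 (𝒮 X))) Y = 0 := by
      intro Y
      have h1 : h (𝒟 X) Y = Ric X Y := h𝒟 X Y
      have h2 : h (𝒮 X) Y = h X (𝒮 Y) := hsa X Y
      have h3 : h (𝒮 (𝒮 X)) Y = h X (𝒮 (𝒮 Y)) := by rw [hsa (𝒮 X) Y, hsa X (𝒮 Y)]
      simp only [map_sub, map_smul, LinearMap.sub_apply, LinearMap.smul_apply, smul_eq_mul]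
      rw [h1, h2, h3, hRicf X Y]
      ring
    have := hnd _ key
    exact sub_eq_zero.mp this
  -- the main identity A = μ S
  have key : ∀ X Y : V, A X Y = μ * S X Y := by
    intro X Y
    have hh3 : h X (𝒮 (𝒮 (𝒮 Y))) = α * h X (𝒮 (𝒮 Y)) + β * h X (𝒮 Y) + γ * h X Y := by
      rw [hcubic Y]
      simp [map_add, map_smul]
    have hh4 : h X (𝒮 (𝒮 (𝒮 (𝒮 Y)))) =
        (α ^ 2 + β) * h X (𝒮 (𝒮 Y)) + (α * β + γ) * h X (𝒮 Y) + α * γ * h X Y := by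
      have h4 : 𝒮 (𝒮 (𝒮 (𝒮 Y))) = (α ^ 2 + β) • 𝒮 (𝒮 Y) + (α * β + γ) • 𝒮 Y + (α * γ) • Y := by
        conv_lhs => rw [hcubic Y]
        rw [map_add, map_add, map_smul, map_smul, map_smul, hcubic Y]
        module
      rw [h4]
      simp [map_add, map_smul]
    have hrd : Ric (𝒟 X) Y = τ * Ric X (𝒮 Y) - Ric X (𝒮 (𝒮 Y)) := by
      rw [hRicf (𝒟 X) Y, h𝒟 X (𝒮 Y), h𝒟 X (𝒮 (𝒮 Y))]
    have hr1 : Ric X (𝒮 Y) = τ * h X (𝒮 (𝒮 Y)) - h X (𝒮 (𝒮 (𝒮 Y))) := hRicf X (𝒮 Y)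
    have hr2 : Ric X (𝒮 (𝒮 Y)) = τ * h X (𝒮 (𝒮 (𝒮 Y))) - h X (𝒮 (𝒮 (𝒮 (𝒮 Y)))) :=
      hRicf X (𝒮 (𝒮 Y))
    rw [hA, hS]
    simp only
    rw [hrd, hr1, hr2, hh3, hh4, hRicf X Y]
    linear_combination (-(h X (𝒮 Y))) * hμ
  refine ⟨key, ?_, ?_, ?_⟩
  · rw [hμ, htrace, hα, hβ, hγ]
    ring
  · intro h0
    refine ⟨-((α - τ) ^ 2 + β), γ * (α - 2 * τ), fun X Y => ?_⟩
    have hk := key X Y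
    rw [hA] at hk
    simp only at hk
    rw [h0, zero_mul] at hk
    linarith [hk]
  · intro hne X₁ X₂ X₃ X₄
    rw [hRstar]
    simp only [KN, key]
    field_simp

end OVAff
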